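/- Let n ≥ 3 and k ≥ 1 with n/gcd(k,n) even. Set g = gcd(k,n), weights (w₁,w₂,w₃,w₄) = (k(n-1)/g, 2k/g, k(n-2)/g, n/g) and d = 2k(n-1)/g. Then the quantity 2g₁ = -1 + gcd(d,w₂)/w₂ + gcd(d,w₃)/w₃ + gcd(d,w₄)/w₄ - d·gcd(w₂,w₃)/(w₂w₃) - d·gcd(w₂,w₄)/(w₂w₄) - d·gcd(w₃,w₄)/(w₃w₄) + d²·gcd(w₂,w₃,w₄)/(w₂w₃w₄) equals gcd(2k, n) - 2. -/
import Mathlib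


/-- Orlik exponent computation for `Dₙ⁽ⁿ⁾[k]`: with `g = gcd(k,n)`,
weights `(w₂,w₃,w₄) = (2k/g, k(n-2)/g, n/g)`, `d = 2k(n-1)/g`, and
`n/g` even, the quantity `2g₁` equals `gcd(2k,n) - 2`. -/
theorem stmt_5 (n k : ℕ) (hn : 3 ≤ n) (hk : 1 ≤ k)
    (g w2 w3 w4 d : ℕ) (hg : g = Nat.gcd k n)
    (hw2 : w2 = 2 * k / g) (hw3 : w3 = k * (n - 2) / g) (hw4 : w4 = n / g)
    (hd : d = 2 * k * (n - 1) / g) (heven : Even (n / g)) :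
    -1 + (Nat.gcd d w2 : ℚ) / w2 + (Nat.gcd d w3 : ℚ) / w3 + (Nat.gcd d w4 : ℚ) / w4
        - (d : ℚ) * (Nat.gcd w2 w3 : ℚ) / (w2 * w3)
        - (d : ℚ) * (Nat.gcd w2 w4 : ℚ) / (w2 * w4)
        - (d : ℚ) * (Nat.gcd w3 w4 : ℚ) / (w3 * w4)
        + (d : ℚ) ^ 2 * (Nat.gcd (Nat.gcd w2 w3) w4 : ℚ) / (w2 * w3 * w4)
      = (Nat.gcd (2 * k) n : ℚ) - 2 := by
  have hg0 : 0 < g := by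
    rw [hg]; exact Nat.gcd_pos_of_pos_left _ hk
  obtain ⟨a, hka⟩ : g ∣ k := hg ▸ Nat.gcd_dvd_left k n
  obtain ⟨b, hnb⟩ : g ∣ n := hg ▸ Nat.gcd_dvd_right k n
  have hak : a = k / g := by rw [hka, Nat.mul_div_cancel_left _ hg0]
  have hbn : b = n / g := by rw [hnb, Nat.mul_div_cancel_left _ hg0]
  have cop : Nat.Coprime a b := by
    have h := Nat.coprime_div_gcd_div_gcd (m := k) (n := n)
      (Nat.gcd_pos_of_pos_left _ hk)
    rwa [← hg, ← hak, ← hbn] at h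
  have hb2 : Even b := hbn ▸ heven
  have hb2' : 2 ∣ b := hb2.two_dvd
  have ha0 : 0 < a := by
    rcases Nat.eq_zero_or_pos a with h | h
    · subst h; simp at hka; omega
    · exact h
  have hb0 : 0 < b := by
    rcases Nat.eq_zero_or_pos b with h | h
    · subst h; simp at hnb; omega
    · exact h
  have hneven : 2 ∣ n := by rw [hnb]; exact Dvd.dvd.mul_left hb2' g
  have hn2even : 2 ∣ n - 2 := Nat.dvd_sub hneven (dvd_refl 2)
  -- explicit weights
  have hw2' : w2 = 2 * a := by
    rw [hw2, hka, show 2 * (g * a) = g * (2 * a) by ring, Nat.mul_div_cancel_left _ hg0]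
  have hw3' : w3 = a * (n - 2) := by
    rw [hw3, hka, show g * a * (n - 2) = g * (a * (n - 2)) by ring,
      Nat.mul_div_cancel_left _ hg0]
  have hw4' : w4 = b := by rw [hw4, ← hbn]
  have hd' : d = 2 * a * (n - 1) := by
    rw [hd, hka, show 2 * (g * a) * (n - 1) = g * (2 * a * (n - 1)) by ring,
      Nat.mul_div_cancel_left _ hg0]
  -- coprimality facts
  have copbn1 : Nat.Coprime b (n - 1) := by
    have h : Nat.Coprime n (n - 1) := by
      have hd1 : Nat.gcd n (n - 1) ∣ 1 := by
        have := Nat.dvd_sub (Nat.gcd_dvd_left n (n - 1)) (Nat.gcd_dvd_right n (n - 1))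
        rwa [show n - (n - 1) = 1 by omega] at this
      exact Nat.dvd_one.mp hd1
    exact Nat.Coprime.coprime_dvd_left ⟨g, by rw [hnb]; ring⟩ h
  -- key: gcd (2*a) b = 2
  have key5 : Nat.gcd (2 * a) b = 2 := by
    apply Nat.dvd_antisymm
    · have ht1 : Nat.gcd (2 * a) b ∣ 2 * a := Nat.gcd_dvd_left _ _
      have ht2 : Nat.Coprime (Nat.gcd (2 * a) b) a :=
        Nat.Coprime.coprime_dvd_left (Nat.gcd_dvd_right _ _) cop.symm
      exact ht2.dvd_of_dvd_mul_right ht1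
    · exact Nat.dvd_gcd ⟨a, rfl⟩ hb2'
  -- the seven gcd evaluations
  have h1 : Nat.gcd d w2 = 2 * a := by
    rw [hd', hw2']
    exact Nat.gcd_eq_right ⟨n - 1, by ring⟩
  have h2 : Nat.gcd d w3 = 2 * a := by
    rw [hd', hw3', show 2 * a * (n - 1) = a * (2 * (n - 1)) by ring, Nat.gcd_mul_left]
    have hkey : Nat.gcd (2 * (n - 1)) (n - 2) = 2 := by
      apply Nat.dvd_antisymm
      · have t1 := Nat.gcd_dvd_left (2 * (n - 1)) (n - 2)
        have t2 := Nat.gcd_dvd_right (2 * (n - 1)) (n - 2)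
        have t3 : Nat.gcd (2 * (n - 1)) (n - 2) ∣ n := by
          have := Nat.dvd_sub t1 t2
          rwa [show 2 * (n - 1) - (n - 2) = n by omega] at this
        have := Nat.dvd_sub t3 t2
        rwa [show n - (n - 2) = 2 by omega] at this
      · exact Nat.dvd_gcd ⟨n - 1, rfl⟩ hn2even
    rw [hkey]; ring
  have h3 : Nat.gcd d w4 = 2 := by
    rw [hd', hw4']
    apply Nat.dvd_antisymm
    · have ht1 : Nat.gcd (2 * a * (n - 1)) b ∣ 2 * a * (n - 1) := Nat.gcd_dvd_left _ _
      have htb : Nat.gcd (2 * a * (n - 1)) b ∣ b := Nat.gcd_dvd_right _ _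
      have ht2 : Nat.Coprime (Nat.gcd (2 * a * (n - 1)) b) (n - 1) :=
        Nat.Coprime.coprime_dvd_left htb copbn1
      have ht3 : Nat.gcd (2 * a * (n - 1)) b ∣ 2 * a := ht2.dvd_of_dvd_mul_right ht1
      have ht4 : Nat.Coprime (Nat.gcd (2 * a * (n - 1)) b) a :=
        Nat.Coprime.coprime_dvd_left htb cop.symm
      exact ht4.dvd_of_dvd_mul_right ht3
    · exact Nat.dvd_gcd ⟨a * (n - 1), by ring⟩ hb2'
  have h4 : Nat.gcd w2 w3 = 2 * a := by
    rw [hw2', hw3', show 2 * a = a * 2 by ring, Nat.gcd_mul_left,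
      Nat.gcd_eq_left hn2even]
  have h5 : Nat.gcd w2 w4 = 2 := by rw [hw2', hw4']; exact key5
  have h6 : Nat.gcd w3 w4 = 2 := by
    rw [hw3', hw4']
    apply Nat.dvd_antisymm
    · have ht1 : Nat.gcd (a * (n - 2)) b ∣ a * (n - 2) := Nat.gcd_dvd_left _ _
      have htb : Nat.gcd (a * (n - 2)) b ∣ b := Nat.gcd_dvd_right _ _
      have ht4 : Nat.Coprime (Nat.gcd (a * (n - 2)) b) a :=
        Nat.Coprime.coprime_dvd_left htb cop.symm
      have ht3 : Nat.gcd (a * (n - 2)) b ∣ n - 2 := by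
        apply ht4.dvd_of_dvd_mul_right
        rwa [show (n - 2) * a = a * (n - 2) by ring]
      have htn : Nat.gcd (a * (n - 2)) b ∣ n := htb.trans ⟨g, by rw [hnb]; ring⟩
      have := Nat.dvd_sub htn ht3
      rwa [show n - (n - 2) = 2 by omega] at this
    · exact Nat.dvd_gcd (Dvd.dvd.mul_left hn2even a) hb2'
  have h7 : Nat.gcd (Nat.gcd w2 w3) w4 = 2 := by
    rw [h4, hw4']; exact key5
  have h8 : Nat.gcd (2 * k) n = 2 * g := by
    rw [hka, hnb, show 2 * (g * a) = g * (2 * a) by ring, Nat.gcd_mul_left, key5]; ring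
  -- now the rational computation
  rw [h1, h2, h3, h7, h4, h5, h6, h8, hw2', hw3', hw4', hd']
  have hnq : (n : ℚ) = (g : ℚ) * (b : ℚ) := by exact_mod_cast congrArg (Nat.cast (R := ℚ)) hnb
  have haq : (a : ℚ) ≠ 0 := by exact_mod_cast ha0.ne'
  have hbq : (b : ℚ) ≠ 0 := by exact_mod_cast hb0.ne'
  have h3q : (3 : ℚ) ≤ (g : ℚ) * (b : ℚ) := by
    rw [← hnq]; exact_mod_cast hn
  have hm0 : (g : ℚ) * (b : ℚ) - 2 ≠ 0 := by
    intro h; have := sub_eq_zero.mp h; linarith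
  push_cast [Nat.cast_sub (show 2 ≤ n by omega), Nat.cast_sub (show 1 ≤ n by omega)]
  rw [hnq]
  field_simp
  ring
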